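/- Let g be a complex reductive Z/m-graded Lie algebra and let x ∈ V = g₁ be semisimple. Then the quantity dim g_l − dim g_l^x is independent of l ∈ Z/m, and consequently the dimension of the G-orbit of x equals m times the dimension of the G₀-orbit of x. -/

import Mathlib

def IsReductiveLie (R L : Type*) [CommRing R] [LieRing L] [LieAlgebra R L] : Prop :=
  LieAlgebra.radical R L = LieAlgebra.center R L


open Module

section Aux
variable {K V : Type*} [Field K] [AddCommGroup V] [Module K V] [FiniteDimensional K V]

lemma aux_finrank_finsetSup {ι : Type*} [DecidableEq ι] (A : ι → Submodule K V)
    (h : iSupIndep A) (s : Finset ι) :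
    finrank K (s.sup A : Submodule K V) = ∑ i ∈ s, finrank K (A i) := by
  induction s using Finset.induction_on with
  | empty => simp [finrank_bot]
  | insert _ _ ha ih =>
    rename_i a s
    rw [Finset.sup_insert, Finset.sum_insert ha]
    have hd : Disjoint (A a) (s.sup A) := by
      refine (h a).mono_right ?_
      refine Finset.sup_le fun b hb => ?_
      exact le_iSup₂ (f := fun (j : ι) (_ : j ≠ a) => A j) b (fun hba => ha (hba ▸ hb))
    have key := Submodule.finrank_sup_add_finrank_inf_eq (A a) (s.sup A)
    rw [hd.eq_bot, finrank_bot] at key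
    omega

lemma aux_finrank_iSup {ι : Type*} [Fintype ι] [DecidableEq ι] (A : ι → Submodule K V)
    (h : iSupIndep A) :
    finrank K (⨆ i, A i : Submodule K V) = ∑ i, finrank K (A i) := by
  have e : (⨆ i, A i) = Finset.univ.sup A := by
    rw [Finset.sup_eq_iSup]; simp
  rw [e, aux_finrank_finsetSup A h]

lemma aux_isCompl_ker_range {f : Module.End K V} (h : f.IsSemisimple) :
    IsCompl (LinearMap.ker f) (LinearMap.range f) := by
  have hker : LinearMap.ker f ∈ f.invtSubmodule := by
    rw [Module.End.mem_invtSubmodule f]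
    intro y hy
    simp_all [Submodule.mem_comap, LinearMap.mem_ker]
  obtain ⟨q, hq, hcompl⟩ := Module.End.isSemisimple_iff.mp h _ hker
  have hmapq : q.map f ≤ q := Submodule.map_le_iff_le_comap.mpr ((Module.End.mem_invtSubmodule f).mp hq)
  have hkerq : LinearMap.ker (f.domRestrict q) = ⊥ := by
    rw [LinearMap.ker_domRestrict, eq_bot_iff]
    rintro ⟨v, hv⟩ hv2
    have : v ∈ LinearMap.ker f ⊓ q := ⟨hv2, hv⟩
    rw [hcompl.disjoint.eq_bot] at this
    simpa using this
  have hrk := LinearMap.finrank_range_add_finrank_ker (f.domRestrict q)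
  rw [LinearMap.range_domRestrict, hkerq, finrank_bot, add_zero] at hrk
  have hqmap : q.map f = q := Submodule.eq_of_le_of_finrank_le hmapq (by omega)
  have hle : q ≤ LinearMap.range f := by
    rw [← hqmap]
    exact LinearMap.map_le_range
  have h1 := Submodule.finrank_add_eq_of_isCompl hcompl
  have h2 := LinearMap.finrank_range_add_finrank_ker f
  have : q = LinearMap.range f := Submodule.eq_of_le_of_finrank_le hle (by omega)
  exact this ▸ hcompl

end Aux

/-- for a semisimple `x ∈ V = g₁`, the codimension `dim g_l − dim g_l^x` is
independent of `l ∈ ℤ/m`, and `dim O^G_x = m · dim O^{G₀}_x`, where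
`dim O^G_x = dim g − dim g^x` and `dim O^{G₀}_x = dim g₀ − dim g₀^x`. -/
theorem semisimple_codim_independent_and_orbit_dim
    {L : Type*} [LieRing L] [LieAlgebra ℂ L] [Module.Finite ℂ L]
    (m : ℕ) [NeZero m]
    (hred : IsReductiveLie ℂ L)
    (G : ZMod m → Submodule ℂ L)
    (hint : DirectSum.IsInternal G)
    (hbr : ∀ i j : ZMod m, ∀ x ∈ G i, ∀ y ∈ G j, ⁅x, y⁆ ∈ G (i + j))
    (θ : L →ₗ⁅ℂ⁆ L)
    (hθ : ∀ l : ZMod m, ∀ x ∈ G l,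
      θ x = Complex.exp (2 * Real.pi * Complex.I / m) ^ (l.val) • x)
    (κ : L →ₗ[ℂ] L →ₗ[ℂ] ℂ)
    (hnondeg : ∀ x : L, (∀ y : L, κ x y = 0) → x = 0)
    (hinv : ∀ a b c : L, κ ⁅a, b⁆ c = κ a ⁅b, c⁆)
    (hθinv : ∀ a b : L, κ (θ a) (θ b) = κ a b)
    (horth : ∀ z ∈ LieAlgebra.center ℂ L, ∀ s ∈ LieAlgebra.derivedSeries ℂ L 1, κ z s = 0)
    (x : L) (hx : x ∈ G 1) (hss : (LieAlgebra.ad ℂ L x).IsSemisimple) :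
    (∀ l l' : ZMod m,
      (Module.finrank ℂ (G l) : ℤ) -
        Module.finrank ℂ ((G l ⊓ LinearMap.ker (LieAlgebra.ad ℂ L x) : Submodule ℂ L)) =
      (Module.finrank ℂ (G l') : ℤ) -
        Module.finrank ℂ ((G l' ⊓ LinearMap.ker (LieAlgebra.ad ℂ L x) : Submodule ℂ L))) ∧
    ((Module.finrank ℂ L : ℤ) - Module.finrank ℂ (LinearMap.ker (LieAlgebra.ad ℂ L x)) =
      m * ((Module.finrank ℂ (G 0) : ℤ) -
        Module.finrank ℂ ((G 0 ⊓ LinearMap.ker (LieAlgebra.ad ℂ L x) : Submodule ℂ L)))) := by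
  classical
  letI : DirectSum.Decomposition G := hint.chooseDecomposition
  set f : Module.End ℂ L := LieAlgebra.ad ℂ L x with hfdef
  set Kk : Submodule ℂ L := LinearMap.ker f with hKdef
  -- f maps G l into G (l+1)
  have hmapf : ∀ (l : ZMod m) (y : L), y ∈ G l → f y ∈ G (l + 1) := by
    intro l y hy
    have h := hbr 1 l x hx y hy
    rw [add_comm] at h
    simpa [hfdef, LieAlgebra.ad_apply] using h
  -- projections
  set π : ZMod m → L → L := fun j y => (DirectSum.decompose G y j : L) with hπdef
  have hπ_mem : ∀ (j : ZMod m) (y : L), π j y ∈ G j := fun j y => (DirectSum.decompose G y j).2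
  have hπ_same : ∀ (j : ZMod m) (y : L), y ∈ G j → π j y = y :=
    fun j y hy => DirectSum.decompose_of_mem_same G hy
  have hπ_ne : ∀ (i j : ZMod m) (y : L), y ∈ G i → i ≠ j → π j y = 0 :=
    fun i j y hy hij => DirectSum.decompose_of_mem_ne G hy hij
  have hπ_add : ∀ (j : ZMod m) (y z : L), π j (y + z) = π j y + π j z := by
    intro j y z
    simp only [hπdef, DirectSum.decompose_add, DirectSum.add_apply, Submodule.coe_add]
  have hπ_sum : ∀ (j : ZMod m) (g : ZMod m → L),
      π j (∑ i : ZMod m, g i) = ∑ i : ZMod m, π j (g i) := by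
    intro j g
    show (DirectSum.decompose G (∑ i : ZMod m, g i) j : L) = _
    rw [DirectSum.decompose_sum, DFinsupp.finset_sum_apply, AddSubmonoidClass.coe_finset_sum]
  have hπ_zero : ∀ j : ZMod m, π j 0 = 0 := by
    intro j; simp [hπdef]
  have hdecomp : ∀ y : L, ∑ j : ZMod m, π j y = y := by
    intro y
    have h := DirectSum.sum_support_decompose G y
    calc ∑ j : ZMod m, π j y
        = ∑ j ∈ (DirectSum.decompose G y).support, π j y := by
          refine (Finset.sum_subset (Finset.subset_univ _) ?_).symm
          intro i _ hi
          simp [hπdef, DFinsupp.notMem_support_iff.mp hi]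
      _ = y := h
  have hcomm : ∀ (j : ZMod m) (y : L), π (j + 1) (f y) = f (π j y) := by
    intro j y
    have h1 : ∑ i : ZMod m, π (j + 1) (f (π i y)) = f (π j y) := by
      rw [Finset.sum_eq_single j]
      · exact hπ_same _ _ (hmapf j _ (hπ_mem j y))
      · intro i _ hij
        exact hπ_ne (i + 1) (j + 1) _ (hmapf i _ (hπ_mem i y))
          (fun h => hij (by exact add_right_cancel h))
      · intro h; exact absurd (Finset.mem_univ j) h
    calc π (j + 1) (f y) = π (j + 1) (f (∑ i : ZMod m, π i y)) := by rw [hdecomp]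
      _ = π (j + 1) (∑ i : ZMod m, f (π i y)) := by rw [map_sum]
      _ = ∑ i : ZMod m, π (j + 1) (f (π i y)) := hπ_sum _ _
      _ = f (π j y) := h1
  -- kernel is graded
  have hKgr : ∀ y ∈ Kk, ∀ j : ZMod m, π j y ∈ Kk := by
    intro y hy j
    have hy0 : f y = 0 := hy
    have : f (π j y) = 0 := by rw [← hcomm j y, hy0, hπ_zero]
    exact this
  -- range is graded
  have hRgr : ∀ y ∈ LinearMap.range f, ∀ j : ZMod m, π j y ∈ LinearMap.range f := by
    rintro y ⟨w, rfl⟩ j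
    refine ⟨π (j - 1) w, ?_⟩
    have h := hcomm (j - 1) w
    rw [sub_add_cancel] at h
    exact h.symm
  -- characterization of graded pieces of the range
  have hRchar : ∀ l : ZMod m,
      LinearMap.range f ⊓ G (l + 1) = (G l).map f := by
    intro l
    apply le_antisymm
    · rintro y ⟨⟨w, rfl⟩, hy2⟩
      refine ⟨π l w, hπ_mem l w, ?_⟩
      have h1 := hcomm l w
      rw [hπ_same _ _ hy2] at h1
      exact h1.symm
    · rintro y ⟨w, hw, rfl⟩
      exact ⟨⟨w, rfl⟩, hmapf l w hw⟩
  -- rank-nullity on each graded piece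
  have hE1 : ∀ l : ZMod m,
      Module.finrank ℂ ((G l).map f) +
        Module.finrank ℂ (G l ⊓ Kk : Submodule ℂ L) = Module.finrank ℂ (G l) := by
    intro l
    have h := LinearMap.finrank_range_add_finrank_ker (f.domRestrict (G l))
    rw [LinearMap.range_domRestrict, LinearMap.ker_domRestrict] at h
    have e : Submodule.comap (G l).subtype (LinearMap.ker f) =
        Submodule.comap (G l).subtype (G l ⊓ Kk) := by
      ext v
      simp only [Submodule.mem_comap, Submodule.mem_inf, hKdef]
      exact ⟨fun hv => ⟨v.2, hv⟩, fun hv => hv.2⟩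
    rw [e, (Submodule.comapSubtypeEquivOfLe (inf_le_left : G l ⊓ Kk ≤ G l)).finrank_eq] at h
    exact h
  have hcompl : IsCompl Kk (LinearMap.range f) := aux_isCompl_ker_range hss
  -- each graded piece splits as kernel part plus range part
  have hE3 : ∀ j : ZMod m, Module.finrank ℂ (G j) =
      Module.finrank ℂ (G j ⊓ Kk : Submodule ℂ L) +
      Module.finrank ℂ (LinearMap.range f ⊓ G j : Submodule ℂ L) := by
    intro j
    have hsup : (G j ⊓ Kk) ⊔ (LinearMap.range f ⊓ G j) = G j := by
      apply le_antisymm (sup_le inf_le_left inf_le_right)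
      intro y hy
      have hmem : y ∈ Kk ⊔ LinearMap.range f := by
        rw [hcompl.sup_eq_top]; trivial
      obtain ⟨k, hk, r, hr, hkr⟩ := Submodule.mem_sup.mp hmem
      have hy' : y = π j k + π j r := by
        rw [← hπ_add, hkr, hπ_same j y hy]
      rw [hy']
      exact Submodule.add_mem_sup ⟨hπ_mem j k, hKgr k hk j⟩ ⟨hRgr r hr j, hπ_mem j r⟩
    have hdis : (G j ⊓ Kk) ⊓ (LinearMap.range f ⊓ G j) = ⊥ := by
      rw [eq_bot_iff]
      rintro y ⟨⟨-, hy2⟩, hy3, -⟩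
      exact hcompl.disjoint.le_bot ⟨hy2, hy3⟩
    have key := Submodule.finrank_sup_add_finrank_inf_eq (G j ⊓ Kk) (LinearMap.range f ⊓ G j)
    rw [hsup, hdis, finrank_bot] at key
    omega
  have hstep : ∀ l : ZMod m,
      (Module.finrank ℂ (G l) : ℤ) - Module.finrank ℂ (G l ⊓ Kk : Submodule ℂ L) =
      (Module.finrank ℂ (G (l + 1)) : ℤ) -
        Module.finrank ℂ (G (l + 1) ⊓ Kk : Submodule ℂ L) := by
    intro l
    have h1 := hE1 l
    have h2 : Module.finrank ℂ ((G l).map f) =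
        Module.finrank ℂ (LinearMap.range f ⊓ G (l + 1) : Submodule ℂ L) := by
      rw [hRchar l]
    have h3 := hE3 (l + 1)
    omega
  have part1 : ∀ l l' : ZMod m,
      (Module.finrank ℂ (G l) : ℤ) - Module.finrank ℂ (G l ⊓ Kk : Submodule ℂ L) =
      (Module.finrank ℂ (G l') : ℤ) - Module.finrank ℂ (G l' ⊓ Kk : Submodule ℂ L) := by
    have key : ∀ (n : ℕ) (l : ZMod m),
        (Module.finrank ℂ (G l) : ℤ) - Module.finrank ℂ (G l ⊓ Kk : Submodule ℂ L) =
        (Module.finrank ℂ (G (l + (n : ZMod m))) : ℤ) -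
          Module.finrank ℂ (G (l + (n : ZMod m)) ⊓ Kk : Submodule ℂ L) := by
      intro n
      induction n with
      | zero =>
        intro l
        have h0 : ((0 : ℕ) : ZMod m) = 0 := Nat.cast_zero
        rw [h0, add_zero]
      | succ k ih =>
        intro l
        have hcast : ((k + 1 : ℕ) : ZMod m) = (k : ZMod m) + 1 := by push_cast; ring
        rw [ih l, hcast, ← add_assoc]
        exact hstep (l + (k : ZMod m))
    intro l l'
    have h := key (l' - l).val l
    rwa [ZMod.natCast_rightInverse (l' - l),
      show l + (l' - l) = l' by ring] at h
  -- total dimensions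
  have hLrank : Module.finrank ℂ L = ∑ j : ZMod m, Module.finrank ℂ (G j) := by
    have h1 := aux_finrank_iSup G hint.submodule_iSupIndep
    rw [hint.submodule_iSup_eq_top] at h1
    rw [← finrank_top ℂ L, h1]
  have hKrank : Module.finrank ℂ Kk =
      ∑ j : ZMod m, Module.finrank ℂ (G j ⊓ Kk : Submodule ℂ L) := by
    have hind : iSupIndep (fun j : ZMod m => G j ⊓ Kk) :=
      hint.submodule_iSupIndep.mono (fun j => inf_le_left)
    have hsup : (⨆ j : ZMod m, (G j ⊓ Kk)) = Kk := by
      apply le_antisymm (iSup_le fun j => inf_le_right)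
      intro y hy
      rw [← hdecomp y]
      exact Submodule.sum_mem _
        (fun j _ => Submodule.mem_iSup_of_mem j ⟨hπ_mem j y, hKgr y hy j⟩)
    have h := aux_finrank_iSup (fun j : ZMod m => G j ⊓ Kk) hind
    rw [hsup] at h
    exact h
  refine ⟨part1, ?_⟩
  have hsum : (Module.finrank ℂ L : ℤ) - Module.finrank ℂ Kk =
      ∑ j : ZMod m, ((Module.finrank ℂ (G j) : ℤ) -
        Module.finrank ℂ (G j ⊓ Kk : Submodule ℂ L)) := by
    rw [hLrank, hKrank, Finset.sum_sub_distrib]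
    push_cast
    ring
  rw [hsum]
  rw [Finset.sum_congr rfl (fun j _ => part1 j 0), Finset.sum_const, Finset.card_univ,
    ZMod.card m]
  simp [nsmul_eq_mul]
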